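/- Let x, y ∈ {0,1}^n be distinct with d_H = d_H(x,y) ≥ 5, and suppose the single-deletion balls of x and y are disjoint. Then it cannot simultaneously hold that x_{[j_3+1, j_{d_H}]} = y_{[j_3, j_{d_H}-1]} and x_{[j_1+1, j_{d_H-2}]} = y_{[j_1, j_{d_H-2}-1]}, where j_1 < … < j_{d_H} are the disagreement positions of x and y. -/

import Mathlib

/-- Single-deletion ball of a list: all lists obtained by deleting one entry. -/
def delBall (x : List Bool) : Set (List Bool) := {z | ∃ i < x.length, z = x.eraseIdx i}

lemma seg_eq {x y : List Bool} {a b t : ℕ}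
    (h : (x.drop a).take t = (y.drop b).take t)
    {p q : ℕ} (hpq : p - a = q - b) (hap : a ≤ p) (hbq : b ≤ q) (ht : p - a < t)
    (hp : p < x.length) (hq : q < y.length) : x[p] = y[q] := by
  have h' := congrArg (fun l => l[p - a]?) h
  simp only [List.getElem?_take, List.getElem?_drop] at h'
  rw [if_pos ht, if_pos ht] at h'
  rw [show a + (p - a) = p from by omega, show b + (p - a) = q from by omega] at h'
  rw [List.getElem?_eq_getElem hp, List.getElem?_eq_getElem hq] at h'
  exact Option.some.inj h'

/-- For distinct `x, y` of length `n` with disjoint single-deletion balls and Hamming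
distance `d ≥ 5`, letting `j i` be the `i`-th smallest (0-indexed) disagreement
position, the equalities `x_{[j₃+1, j_d]} = y_{[j₃, j_d−1]}` and
`x_{[j₁+1, j_{d−2}]} = y_{[j₁, j_{d−2}−1]}` cannot hold simultaneously. -/
theorem stmt15 (n : ℕ) (x y : List Bool) (hx : x.length = n) (hy : y.length = n)
    (hne : x ≠ y) (hD : delBall x ∩ delBall y = ∅)
    (d : ℕ)
    (hd : d = ((Finset.range n).filter
      (fun k => x.getD k false ≠ y.getD k false)).card)
    (hd5 : 5 ≤ d)
    (j : ℕ → ℕ)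
    (hj : ∀ i, j i = (((Finset.range n).filter
      (fun k => x.getD k false ≠ y.getD k false)).sort (· ≤ ·)).getD (i - 1) 0) :
    ¬ ((x.drop (j 3 + 1)).take (j d - j 3) = (y.drop (j 3)).take (j d - j 3) ∧
       (x.drop (j 1 + 1)).take (j (d - 2) - j 1) =
         (y.drop (j 1)).take (j (d - 2) - j 1)) := by
  rintro ⟨h1, h2⟩
  set S := ((Finset.range n).filter (fun k => x.getD k false ≠ y.getD k false)) with hS
  set L := S.sort (· ≤ ·) with hLdef
  have hlen : L.length = d := by rw [hd, hLdef]; exact Finset.length_sort _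
  have h0 : 0 < L.length := by omega
  have h2' : 2 < L.length := by omega
  have hc' : d - 3 < L.length := by omega
  have he' : d - 1 < L.length := by omega
  have hsort : L.Pairwise (· < ·) := (Finset.sortedLT_sort S).pairwise
  have hmono : ∀ p q (hp : p < L.length) (hq : q < L.length), p < q → L[p] < L[q] := by
    intro p q hp hq hpq
    have := List.Pairwise.rel_get_of_lt hsort (a := ⟨p, hp⟩) (b := ⟨q, hq⟩)
      (Fin.mk_lt_mk.mpr hpq)
    simpa using this
  have hj1 : j 1 = L[0] := by rw [hj]; exact List.getD_eq_getElem L 0 h0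
  have hj3 : j 3 = L[2] := by rw [hj]; exact List.getD_eq_getElem L 0 h2'
  have hjc : j (d - 2) = L[d - 3] := by
    rw [hj, show d - 2 - 1 = d - 3 from by omega]; exact List.getD_eq_getElem L 0 hc'
  have hjd : j d = L[d - 1] := by rw [hj]; exact List.getD_eq_getElem L 0 he'
  have memS : ∀ (i : ℕ) (h : i < L.length), L[i] ∈ S := by
    intro i h
    exact (Finset.mem_sort _).mp (List.getElem_mem h)
  have hSlt : ∀ k ∈ S, k < n := by
    intro k hk
    rw [hS, Finset.mem_filter, Finset.mem_range] at hk
    exact hk.1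
  have agree : ∀ k (hkx : k < x.length) (hky : k < y.length), k ∉ S → x[k] = y[k] := by
    intro k hkx hky hk
    by_contra hne'
    apply hk
    rw [hS, Finset.mem_filter, Finset.mem_range]
    refine ⟨by omega, ?_⟩
    rw [List.getD_eq_getElem x false hkx, List.getD_eq_getElem y false hky]
    exact hne'
  have hmax : ∀ k ∈ S, k ≤ j d := by
    intro k hk
    have hkL : k ∈ L := (Finset.mem_sort _).mpr hk
    obtain ⟨i, hi, rfl⟩ := List.mem_iff_getElem.mp hkL
    rw [hjd]
    rcases eq_or_lt_of_le (show i ≤ d - 1 from by omega) with h | h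
    · simp only [h]; exact le_rfl
    · exact le_of_lt (hmono _ _ _ _ h)
  have hmin : ∀ k ∈ S, j 1 ≤ k := by
    intro k hk
    have hkL : k ∈ L := (Finset.mem_sort _).mpr hk
    obtain ⟨i, hi, rfl⟩ := List.mem_iff_getElem.mp hkL
    rw [hj1]
    rcases Nat.eq_zero_or_pos i with h | h
    · simp only [h]; exact le_rfl
    · exact le_of_lt (hmono _ _ _ _ h)
  have hab : j 1 < j 3 := by rw [hj1, hj3]; exact hmono _ _ _ _ (by omega)
  have hbc : j 3 ≤ j (d - 2) := by
    rw [hj3, hjc]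
    rcases eq_or_lt_of_le (show 2 ≤ d - 3 from by omega) with h | h
    · simp only [← h]; exact le_rfl
    · exact le_of_lt (hmono _ _ _ _ h)
  have hce : j (d - 2) < j d := by rw [hjc, hjd]; exact hmono _ _ _ _ (by omega)
  have hen : j d < n := hSlt _ (by rw [hjd]; exact memS _ he')
  have key : x.eraseIdx (j 1) = y.eraseIdx (j d) := by
    apply List.ext_getElem
    · rw [List.length_eraseIdx, List.length_eraseIdx, if_pos (by omega), if_pos (by omega)]
      omega
    · intro k hk1 hk2
      have hklen : k < n - 1 := by
        rw [List.length_eraseIdx, if_pos (by omega)] at hk1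
        omega
      rw [List.getElem_eraseIdx, List.getElem_eraseIdx]
      by_cases hka : k < j 1
      · rw [dif_pos hka, dif_pos (show k < j d from by omega)]
        exact agree k (by omega) (by omega) (fun hkS => absurd (hmin k hkS) (by omega))
      · rw [dif_neg hka]
        by_cases hke : k < j d
        · rw [dif_pos hke]
          by_cases hkc : k < j (d - 2)
          · exact seg_eq h2 (by omega) (by omega) (by omega) (by omega) (by omega) (by omega)
          · exact seg_eq h1 (by omega) (by omega) (by omega) (by omega) (by omega) (by omega)
        · rw [dif_neg hke]
          exact agree (k + 1) (by omega) (by omega)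
            (fun hkS => absurd (hmax _ hkS) (by omega))
  have hz : x.eraseIdx (j 1) ∈ delBall x ∩ delBall y :=
    ⟨⟨j 1, by omega, rfl⟩, ⟨j d, by omega, key⟩⟩
  rw [hD] at hz
  exact hz
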